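/- Let N ≥ 3, 0 < μ ≤ 2, α < 0, and let j be an integer with 0 ≤ j ≤ ⌊(N-1)/2⌋. Then the function ω ↦ M[Φ_ω^j] is strictly increasing on (α²/(N-2j)², ∞). Moreover the infimum over ω of M[Φ_ω^j] equals 0 when j = 0 (the N-tail state can have arbitrarily small mass), while for every j ≥ 1 this infimum is strictly positive (equal to ((μ+1)^{1/μ}/μ)(α²/(N-2j)²)^{1/μ - 1/2} · 2j ∫₀¹ (1-t²)^{1/μ-1} dt). -/

import Mathlib

open Real MeasureTheory

/-- `sech y = 1 / cosh y`. -/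
noncomputable def sech (y : ℝ) : ℝ := 1 / Real.cosh y

/-- Inverse hyperbolic tangent. -/
noncomputable def artanh (x : ℝ) : ℝ := (1 / 2) * Real.log ((1 + x) / (1 - x))

/-- The half-line soliton profile `φ_{ω,a}(x) = [(μ+1)ω]^{1/(2μ)} sech^{1/μ}(μ√ω (x-a))`. -/
noncomputable def solProfile (μ ω a : ℝ) (x : ℝ) : ℝ :=
  ((μ + 1) * ω) ^ (1 / (2 * μ)) * sech (μ * Real.sqrt ω * (x - a)) ^ (1 / μ)

/-- `a^j = (1/(μ√ω)) arctanh(|α|/((N-2j)√ω))`. -/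
noncomputable def aCenter (μ α : ℝ) (N j : ℕ) (ω : ℝ) : ℝ :=
  (1 / (μ * Real.sqrt ω)) * _root_.artanh (|α| / (((N : ℝ) - 2 * j) * Real.sqrt ω))

/-- The stationary state `Φ_ω^j` with `j` bumps. -/
noncomputable def statState (μ α : ℝ) (N j : ℕ) (ω : ℝ) : Fin N → ℝ → ℝ := fun i =>
  if (i : ℕ) < j then solProfile μ ω (aCenter μ α N j ω)
  else solProfile μ ω (-(aCenter μ α N j ω))

/-- The mass `M[Ψ] = Σ_i ∫_0^∞ |ψ_i|² dx` of the stationary state `Φ_ω^j`. -/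
noncomputable def massState (μ α : ℝ) (N j : ℕ) (ω : ℝ) : ℝ :=
  ∑ i : Fin N, ∫ x in Set.Ioi (0 : ℝ), |statState μ α N j ω i x| ^ 2

lemma sech_pos (y : ℝ) : 0 < sech y := by
  unfold sech; positivity

lemma tanh_lt_one (x : ℝ) : Real.tanh x < 1 := by
  rw [Real.tanh_eq_sinh_div_cosh, div_lt_one (Real.cosh_pos x)]
  rw [Real.sinh_eq, Real.cosh_eq]
  have := Real.exp_pos (-x)
  linarith

lemma neg_one_lt_tanh (x : ℝ) : -1 < Real.tanh x := by
  rw [Real.tanh_eq_sinh_div_cosh, lt_div_iff₀ (Real.cosh_pos x)]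
  rw [Real.sinh_eq, Real.cosh_eq]
  have := Real.exp_pos x
  linarith

lemma hasDerivAt_tanh (x : ℝ) : HasDerivAt Real.tanh (sech x ^ 2) x := by
  have h : HasDerivAt Real.tanh ((Real.cosh x * Real.cosh x - Real.sinh x * Real.sinh x) / Real.cosh x ^ 2) x := by
    have := (Real.hasDerivAt_sinh x).div (Real.hasDerivAt_cosh x) (ne_of_gt (Real.cosh_pos x))
    have he : Real.tanh = fun y => Real.sinh y / Real.cosh y := funext fun y => Real.tanh_eq_sinh_div_cosh y
    rw [he]; exact this
  convert h using 1
  have h2 := Real.cosh_sq_sub_sinh_sq x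
  have hc := Real.cosh_pos x
  rw [sech, div_pow, one_pow, ← sq, ← sq, h2]

lemma strictMono_tanh : StrictMono Real.tanh := by
  apply strictMono_of_deriv_pos
  intro x
  rw [(hasDerivAt_tanh x).deriv]
  exact pow_pos (sech_pos x) 2

lemma one_sub_tanh_sq (x : ℝ) : 1 - Real.tanh x ^ 2 = sech x ^ 2 := by
  have h2 := Real.cosh_sq_sub_sinh_sq x
  have hc := Real.cosh_pos x
  rw [Real.tanh_eq_sinh_div_cosh]
  field_simp [sech]
  rw [h2, sech, div_pow, one_pow, mul_one_div_cancel (pow_ne_zero 2 hc.ne')]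

lemma tanh_formula (y : ℝ) : Real.tanh y = (Real.exp (2*y) - 1) / (Real.exp (2*y) + 1) := by
  rw [Real.tanh_eq_sinh_div_cosh, Real.sinh_eq, Real.cosh_eq]
  have h1 : Real.exp (2*y) = Real.exp y * Real.exp y := by
    rw [← Real.exp_add]; ring_nf
  have h2 := Real.exp_pos y
  have h3 := Real.exp_pos (-y)
  have h4 : Real.exp y * Real.exp (-y) = 1 := by rw [← Real.exp_add]; simp
  rw [h1]
  field_simp
  nlinarith

lemma tanh_artanh {x : ℝ} (h1 : -1 < x) (h2 : x < 1) : Real.tanh (_root_.artanh x) = x := by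
  have hu : (0:ℝ) < (1 + x) / (1 - x) := by
    apply div_pos <;> linarith
  rw [tanh_formula, _root_.artanh]
  have : 2 * ((1:ℝ)/2 * Real.log ((1 + x) / (1 - x))) = Real.log ((1+x)/(1-x)) := by ring
  rw [this, Real.exp_log hu]
  have h1x : (1:ℝ) - x ≠ 0 := by linarith
  field_simp
  ring

/-- image of Ioi 0 under x ↦ tanh (k(x-a)) -/
lemma image_tanh_affine {k a : ℝ} (hk : 0 < k) :
    (fun x => Real.tanh (k * (x - a))) '' Set.Ioi 0 = Set.Ioo (Real.tanh (-(k*a))) 1 := by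
  ext t
  constructor
  · rintro ⟨x, hx, rfl⟩
    refine ⟨strictMono_tanh ?_, _root_.tanh_lt_one _⟩
    have : (0:ℝ) < x := hx
    nlinarith
  · rintro ⟨h1, h2⟩
    have hm1 : -1 < t := lt_trans (_root_.neg_one_lt_tanh _) h1
    refine ⟨_root_.artanh t / k + a, ?_, ?_⟩
    · have hy : -(k*a) < _root_.artanh t := by
        by_contra hc
        push_neg at hc
        have := strictMono_tanh.monotone hc
        rw [tanh_artanh hm1 h2] at this
        exact absurd this (not_le.mpr h1)
      have : -a < _root_.artanh t / k := by
        rw [lt_div_iff₀ hk]; nlinarith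
      simp only [Set.mem_Ioi]; linarith
    · show Real.tanh (k * (_root_.artanh t / k + a - a)) = t
      have he : k * (_root_.artanh t / k + a - a) = _root_.artanh t := by field_simp; ring
      rw [he, tanh_artanh hm1 h2]

lemma key_subst {k a p : ℝ} (hk : 0 < k) :
    ∫ t in Set.Ioo (Real.tanh (-(k*a))) 1, (1 - t^2) ^ (p-1)
      = k * ∫ x in Set.Ioi (0:ℝ), sech (k*(x-a)) ^ (2*p) := by
  rw [← image_tanh_affine hk]
  rw [integral_image_eq_integral_abs_deriv_smul measurableSet_Ioi
      (f' := fun x => k * sech (k*(x-a)) ^ 2)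
      (fun x _ => by
        have h1 : HasDerivAt (fun x => k * (x - a)) k x := by
          simpa using ((hasDerivAt_id x).sub_const a).const_mul k
        have := (hasDerivAt_tanh (k*(x-a))).comp x h1
        rw [mul_comm] at this
        exact this.hasDerivWithinAt)
      (fun x _ y _ hxy => by
        have := strictMono_tanh.injective hxy
        have : k * (x - a) = k * (y - a) := this
        nlinarith)]
  rw [← MeasureTheory.integral_const_mul]
  congr 1
  ext x
  have hs := sech_pos (k*(x-a))
  rw [one_sub_tanh_sq]
  rw [smul_eq_mul, abs_of_pos (by positivity)]
  rw [mul_assoc]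
  congr 1
  rw [← Real.rpow_natCast (sech (k*(x-a))) 2, ← Real.rpow_mul hs.le, ← Real.rpow_add hs]
  congr 1
  push_cast
  ring

lemma g_intervalIntegrable {p s : ℝ} (hp : 0 < p) (h1 : -1 < s) (h2 : s ≤ 1) :
    IntervalIntegrable (fun t => (1 - t^2) ^ (p-1)) volume s 1 := by
  set C : ℝ := max ((1+s)^(p-1)) (2^(p-1)) with hC
  have hC0 : 0 ≤ C := le_trans (Real.rpow_nonneg (by norm_num) _) (le_max_right _ _)
  have hdom : IntervalIntegrable (fun t => C * (1-t)^(p-1)) volume s 1 := by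
    have h0 : IntervalIntegrable (fun x : ℝ => x ^ (p-1)) volume (1-1) (1-s) :=
      intervalIntegral.intervalIntegrable_rpow' (by linarith)
    have := (h0.comp_sub_left 1)
    simp only [sub_sub_cancel] at this
    exact (this.const_mul C).symm
  apply hdom.mono_fun
  · exact (Measurable.aestronglyMeasurable (by measurability))
  · rw [Filter.EventuallyLE, ae_restrict_iff' measurableSet_uIoc]
    apply Filter.Eventually.of_forall
    intro t ht
    rw [Set.uIoc_of_le h2, Set.mem_Ioc] at ht
    have h1t : 0 < 1 + t := by linarith
    have h2t : 0 ≤ 1 - t := by linarith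
    have hfac : (1:ℝ) - t^2 = (1-t) * (1+t) := by ring
    have hsplit : (1 - t^2) ^ (p-1) = (1-t)^(p-1) * (1+t)^(p-1) := by
      rw [hfac, Real.mul_rpow h2t h1t.le]
    have hle : (1+t)^(p-1) ≤ C := by
      rcases le_or_gt 0 (p-1) with hq | hq
      · exact le_trans (Real.rpow_le_rpow (by linarith) (by linarith) hq) (le_max_right _ _)
      · exact le_trans (Real.rpow_le_rpow_of_nonpos (by linarith) (by linarith) hq.le)
          (le_max_left _ _)
    simp only [Real.norm_eq_abs]
    rw [hsplit, abs_of_nonneg (by positivity), abs_of_nonneg (by positivity)]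
    rw [mul_comm C _]
    exact mul_le_mul_of_nonneg_left hle (Real.rpow_nonneg h2t _)

lemma comp_mass {μ ω a : ℝ} (hμ : 0 < μ) (hω : 0 < ω) :
    ∫ x in Set.Ioi (0:ℝ), |solProfile μ ω a x| ^ 2
      = ((μ+1)*ω)^(1/μ) * (1/(μ*Real.sqrt ω)) *
        ∫ t in (Real.tanh (-(μ*Real.sqrt ω*a)))..1, (1-t^2)^(1/μ-1) := by
  set k : ℝ := μ * Real.sqrt ω with hk
  have hkpos : 0 < k := by
    have := Real.sqrt_pos.mpr hω
    positivity
  have hA : (0:ℝ) < (μ+1)*ω := by positivity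
  have hpt : ∀ x : ℝ, |solProfile μ ω a x| ^ 2
      = ((μ+1)*ω)^(1/μ) * sech (k*(x-a)) ^ (2*(1/μ)) := by
    intro x
    have hs := sech_pos (k*(x-a))
    rw [solProfile, abs_of_nonneg (by positivity)]
    rw [mul_pow]
    congr 1
    · rw [← Real.rpow_natCast (((μ+1)*ω) ^ (1/(2*μ))) 2, ← Real.rpow_mul hA.le]
      congr 1
      push_cast
      field_simp
    · rw [← Real.rpow_natCast (sech (k*(x-a)) ^ (1/μ)) 2, ← Real.rpow_mul hs.le]
      congr 1
      push_cast
      ring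
  simp_rw [hpt]
  rw [MeasureTheory.integral_const_mul]
  have h1 : Real.tanh (-(k*a)) ≤ 1 := (_root_.tanh_lt_one _).le
  rw [intervalIntegral.integral_of_le h1, MeasureTheory.integral_Ioc_eq_integral_Ioo,
    key_subst hkpos]
  field_simp

lemma sum_ite_count {N j : ℕ} (hj : j ≤ N) (c1 c2 : ℝ) :
    ∑ i : Fin N, (if (i:ℕ) < j then c1 else c2) = j * c1 + (N - j : ℕ) * c2 := by
  rw [Fin.sum_univ_eq_sum_range (fun i => if i < j then c1 else c2) N]
  rw [Finset.range_eq_Ico, ← Finset.sum_Ico_consecutive _ (Nat.zero_le j) hj]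
  rw [Finset.sum_congr rfl (fun i hi => if_pos (Finset.mem_Ico.mp hi).2),
    Finset.sum_congr rfl (fun i hi => if_neg (not_lt.mpr (Finset.mem_Ico.mp hi).1))]
  simp [Nat.card_Ico, mul_comm]

/-- The mass written via the primitive `G s = ∫_0^s (1-t²)^{1/μ-1}`. -/
lemma mass_formula {N j : ℕ} {μ α : ℝ} (hμ : 0 < μ) (hα : α < 0)
    (hjN : 2 * j + 1 ≤ N) {ω : ℝ} (hω : α ^ 2 / ((N : ℝ) - 2 * j) ^ 2 < ω) :
    massState μ α N j ω
      = ((μ+1)^(1/μ)/μ) * ω ^ (1/μ - 1/2) *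
        ((N : ℝ) * (∫ t in (0:ℝ)..1, (1-t^2)^(1/μ-1))
          - ((N:ℝ) - 2*j) * (∫ t in (0:ℝ)..(|α| / (((N:ℝ) - 2*j) * Real.sqrt ω)), (1-t^2)^(1/μ-1))) := by
  set m : ℝ := (N : ℝ) - 2 * j with hm
  have hm1 : (1:ℝ) ≤ m := by
    have : (2*j+1 : ℝ) ≤ N := by exact_mod_cast hjN
    simp only [hm]; linarith
  have hm0 : 0 < m := by linarith
  have hα0 : 0 < |α| := abs_pos.mpr (ne_of_lt hα)
  have hωc : 0 < α ^ 2 / m ^ 2 :=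
    div_pos (by nlinarith) (by positivity)
  have hω0 : 0 < ω := lt_trans hωc hω
  have hsq : 0 < Real.sqrt ω := Real.sqrt_pos.mpr hω0
  set h : ℝ := |α| / (m * Real.sqrt ω) with hh
  have hh0 : 0 < h := by positivity
  have hh1 : h < 1 := by
    rw [hh, div_lt_one (by positivity)]
    have h2 : α^2 < m^2 * ω := by
      rw [div_lt_iff₀ (by positivity)] at hω; linarith
    have key : |α|^2 < (m*Real.sqrt ω)^2 := by
      rw [mul_pow, Real.sq_sqrt hω0.le, sq_abs]; exact h2
    exact lt_of_pow_lt_pow_left₀ 2 (by positivity) key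
  have hjN' : j ≤ N := by omega
  set g : ℝ → ℝ := fun t => (1 - t^2) ^ (1/μ - 1) with hg
  have hgI : ∀ x y, -h ≤ x → x ≤ 1 → -h ≤ y → y ≤ 1 → IntervalIntegrable g volume x y := by
    intro x y h1 h2 h3 h4
    have hmain : IntervalIntegrable g volume (-h) 1 := by
      have := g_intervalIntegrable (p := 1/μ) (s := -h) (one_div_pos.mpr hμ) (by linarith) (by linarith)
      simpa [hg] using this
    apply hmain.mono_set
    apply Set.uIcc_subset_uIcc <;>
      (rw [Set.uIcc_of_le (by linarith : -h ≤ (1:ℝ))]; exact ⟨by linarith, by linarith⟩)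
  -- the tanh values at the endpoints
  have harg : |α| / (((N:ℝ) - 2 * j) * Real.sqrt ω) = h := by rw [hh, hm]
  have hart : μ * Real.sqrt ω * aCenter μ α N j ω = _root_.artanh h := by
    rw [aCenter, harg]
    field_simp
  have htanh1 : Real.tanh (-(μ * Real.sqrt ω * aCenter μ α N j ω)) = -h := by
    rw [hart, Real.tanh_neg, tanh_artanh (by linarith) hh1]
  have htanh2 : Real.tanh (-(μ * Real.sqrt ω * -aCenter μ α N j ω)) = h := by
    rw [show -(μ * Real.sqrt ω * -aCenter μ α N j ω) = μ * Real.sqrt ω * aCenter μ α N j ω by ring,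
      hart, tanh_artanh (by linarith) hh1]
  -- the two component integrals
  set K : ℝ := ((μ+1)*ω)^(1/μ) * (1/(μ*Real.sqrt ω)) with hKdef
  have hI1 : ∫ x in Set.Ioi (0:ℝ), |solProfile μ ω (aCenter μ α N j ω) x| ^ 2
      = K * ∫ t in (-h)..1, g t := by
    rw [comp_mass hμ hω0, htanh1]
  have hI2 : ∫ x in Set.Ioi (0:ℝ), |solProfile μ ω (-aCenter μ α N j ω) x| ^ 2
      = K * ∫ t in h..1, g t := by
    rw [comp_mass hμ hω0, htanh2]
  -- massState as a counted sum
  have hcomp : ∀ i : Fin N, (∫ x in Set.Ioi (0:ℝ), |statState μ α N j ω i x| ^ 2)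
      = if (i:ℕ) < j then K * ∫ t in (-h)..1, g t else K * ∫ t in h..1, g t := by
    intro i
    by_cases hi : (i:ℕ) < j
    · simp only [statState, hi, if_true]; exact hI1
    · simp only [statState, hi, if_false]; exact hI2
  have hsum : massState μ α N j ω
      = (j:ℝ) * (K * ∫ t in (-h)..1, g t) + ((N - j : ℕ):ℝ) * (K * ∫ t in h..1, g t) := by
    rw [massState]
    simp_rw [hcomp]
    exact sum_ite_count hjN' _ _
  -- interval integral identities
  have e1 : (∫ t in (-h)..1, g t) = (∫ t in (-h)..h, g t) + ∫ t in h..1, g t :=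
    (intervalIntegral.integral_add_adjacent_intervals
      (hgI _ _ le_rfl (by linarith) (by linarith) hh1.le)
      (hgI _ _ (by linarith) hh1.le (by linarith) le_rfl)).symm
  have e2 : (∫ t in (-h)..(0:ℝ), g t) = ∫ t in (0:ℝ)..h, g t := by
    have := intervalIntegral.integral_comp_neg (a := (0:ℝ)) (b := h) g
    simp only [neg_zero] at this
    rw [← this]
    congr 1
    ext t
    simp [hg]
  have e3 : (∫ t in (-h)..h, g t) = (∫ t in (-h)..(0:ℝ), g t) + ∫ t in (0:ℝ)..h, g t :=
    (intervalIntegral.integral_add_adjacent_intervals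
      (hgI _ _ le_rfl (by linarith) (by linarith) (by linarith))
      (hgI _ _ (by linarith) (by linarith) (by linarith) hh1.le)).symm
  have e4 : (∫ t in (0:ℝ)..1, g t) = (∫ t in (0:ℝ)..h, g t) + ∫ t in h..1, g t :=
    (intervalIntegral.integral_add_adjacent_intervals
      (hgI _ _ (by linarith) (by linarith) (by linarith) hh1.le)
      (hgI _ _ (by linarith) hh1.le (by linarith) le_rfl)).symm
  -- the prefactor
  have hK : K = ((μ+1)^(1/μ)/μ) * ω ^ (1/μ - 1/2) := by
    rw [hKdef, Real.mul_rpow (by positivity) hω0.le, Real.rpow_sub hω0, Real.sqrt_eq_rpow]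
    have h1 : (0:ℝ) < ω ^ ((1:ℝ)/2) := Real.rpow_pos_of_pos hω0 _
    field_simp
  -- put everything together
  rw [hsum, Nat.cast_sub hjN', hK, e1, e3, e2, e4]
  push_cast
  rw [hm]
  ring


theorem mass_monotone_and_infimum (N : ℕ) (hN : 3 ≤ N) (μ α : ℝ)
    (hμ0 : 0 < μ) (hμ2 : μ ≤ 2) (hα : α < 0) (j : ℕ) (hj : j ≤ (N - 1) / 2) :
    StrictMonoOn (massState μ α N j) (Set.Ioi (α ^ 2 / ((N : ℝ) - 2 * j) ^ 2)) ∧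
    (j = 0 →
      sInf (massState μ α N j '' Set.Ioi (α ^ 2 / ((N : ℝ) - 2 * j) ^ 2)) = 0) ∧
    (1 ≤ j →
      sInf (massState μ α N j '' Set.Ioi (α ^ 2 / ((N : ℝ) - 2 * j) ^ 2))
          = ((μ + 1) ^ (1 / μ) / μ) * (α ^ 2 / ((N : ℝ) - 2 * j) ^ 2) ^ (1 / μ - 1 / 2) *
            (2 * j * ∫ t in (0 : ℝ)..(1 : ℝ), (1 - t ^ 2) ^ (1 / μ - 1)) ∧
      0 < sInf (massState μ α N j '' Set.Ioi (α ^ 2 / ((N : ℝ) - 2 * j) ^ 2))) := by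
  have hjN : 2 * j + 1 ≤ N := by omega
  set m : ℝ := (N : ℝ) - 2 * j with hm
  have hm1 : (1:ℝ) ≤ m := by
    have : (2*j+1 : ℝ) ≤ N := by exact_mod_cast hjN
    simp only [hm]; linarith
  have hm0 : 0 < m := by linarith
  have hmN : m ≤ (N:ℝ) := by
    have : (0:ℝ) ≤ 2*j := by positivity
    simp only [hm]; linarith
  have hα0 : 0 < |α| := abs_pos.mpr (ne_of_lt hα)
  set ωc : ℝ := α ^ 2 / m ^ 2 with hωcdef
  have hωc : 0 < ωc := div_pos (by nlinarith) (by positivity)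
  set g : ℝ → ℝ := fun t => (1 - t^2) ^ (1/μ - 1) with hg
  set G : ℝ → ℝ := fun s => ∫ t in (0:ℝ)..s, g t with hG
  set q : ℝ := 1/μ - 1/2 with hq
  have hq0 : 0 ≤ q := by
    have : 1/2 ≤ 1/μ := by
      rw [div_le_div_iff₀ (by norm_num) hμ0]; linarith
    simp only [hq]; linarith
  set C : ℝ := (μ+1)^(1/μ)/μ with hC
  have hC0 : 0 < C := div_pos (Real.rpow_pos_of_pos (by linarith) _) hμ0
  set hfun : ℝ → ℝ := fun ω => |α| / (m * Real.sqrt ω) with hhfun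
  set mass2 : ℝ → ℝ := fun ω => C * ω ^ q * ((N:ℝ) * G 1 - m * G (hfun ω)) with hmass2
  clear_value m ωc g G q C hfun mass2
  -- basic properties of hfun on Ioi ωc
  have hprop : ∀ ω ∈ Set.Ioi ωc, 0 < ω ∧ 0 < hfun ω ∧ hfun ω < 1 := by
    intro ω hω
    have hω0 : 0 < ω := lt_trans hωc hω
    have hsq : 0 < Real.sqrt ω := Real.sqrt_pos.mpr hω0
    simp only [hhfun]
    refine ⟨hω0, div_pos hα0 (by positivity), ?_⟩
    rw [div_lt_one (by positivity)]
    have hω' : α ^ 2 / m ^ 2 < ω := by rw [← hωcdef]; exact hω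
    have h2 : α^2 < m^2 * ω := by
      rw [div_lt_iff₀ (by positivity)] at hω'; linarith
    have key : |α|^2 < (m*Real.sqrt ω)^2 := by
      rw [mul_pow, Real.sq_sqrt hω0.le, sq_abs]; exact h2
    exact lt_of_pow_lt_pow_left₀ 2 (by positivity) key
  -- massState agrees with mass2 on Ioi ωc
  have hmass : ∀ ω ∈ Set.Ioi ωc, massState μ α N j ω = mass2 ω := by
    intro ω hω
    have heq := mass_formula (N := N) (j := j) (α := α) hμ0 hα hjN (ω := ω)
      (by rw [← hm, ← hωcdef]; exact hω)
    rw [heq]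
    simp only [hmass2, hC, hq, hG, hg, hhfun, hm]
  -- integrability on subintervals of [0,1]
  have hgI : ∀ x y, 0 ≤ x → x ≤ 1 → 0 ≤ y → y ≤ 1 → IntervalIntegrable g volume x y := by
    intro x y h1 h2 h3 h4
    have hmain : IntervalIntegrable g volume 0 1 := by
      have := g_intervalIntegrable (p := 1/μ) (s := 0) (one_div_pos.mpr hμ0) (by norm_num)
        (by norm_num)
      simpa [hg] using this
    apply hmain.mono_set
    apply Set.uIcc_subset_uIcc <;>
      (rw [Set.uIcc_of_le (by norm_num : (0:ℝ) ≤ 1)]; exact ⟨by linarith, by linarith⟩)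
  -- strict monotonicity of G on [0,1]
  have hGlt : ∀ x y, 0 ≤ x → x < y → y ≤ 1 → G x < G y := by
    intro x y h1 h2 h3
    have hxy : IntervalIntegrable g volume x y := hgI x y h1 (by linarith) (by linarith) h3
    have h0x : IntervalIntegrable g volume 0 x := hgI 0 x le_rfl (by norm_num) h1 (by linarith)
    have hadd : (∫ t in (0:ℝ)..x, g t) + (∫ t in x..y, g t) = ∫ t in (0:ℝ)..y, g t :=
      intervalIntegral.integral_add_adjacent_intervals h0x hxy
    have hpos : 0 < ∫ t in x..y, g t := by
      apply intervalIntegral.intervalIntegral_pos_of_pos_on hxy _ h2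
      intro t ht
      have ht2 : (0:ℝ) < 1 - t^2 := by nlinarith [ht.1, ht.2]
      simp only [hg]
      exact Real.rpow_pos_of_pos ht2 _
    simp only [hG]
    linarith
  have hGnonneg : ∀ x, 0 ≤ x → x ≤ 1 → 0 ≤ G x := by
    intro x h1 h2
    simp only [hG]
    apply intervalIntegral.integral_nonneg h1
    intro t ht
    simp only [hg]
    exact Real.rpow_nonneg (by nlinarith [ht.1, ht.2]) _
  have hG1pos : 0 < G 1 := by
    have := hGlt 0 1 le_rfl one_pos le_rfl
    have hG00 : G 0 = 0 := by simp only [hG]; exact intervalIntegral.integral_same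
    linarith
  -- strict monotonicity of mass2
  have hSM : StrictMonoOn mass2 (Set.Ioi ωc) := by
    intro ω1 h1 ω2 h2 h12
    obtain ⟨hω10, hh10, hh11⟩ := hprop ω1 h1
    obtain ⟨hω20, hh20, hh21⟩ := hprop ω2 h2
    have hhlt : hfun ω2 < hfun ω1 := by
      simp only [hhfun]
      apply div_lt_div_of_pos_left hα0 (by positivity)
      exact mul_lt_mul_of_pos_left (Real.sqrt_lt_sqrt hω10.le h12) hm0
    have hGlt2 : G (hfun ω2) < G (hfun ω1) := hGlt _ _ hh20.le hhlt hh11.le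
    have hGy := hGlt (hfun ω2) 1 hh20.le hh21 le_rfl
    have hGnn := hGnonneg (hfun ω2) hh20.le hh21.le
    have hB2pos : 0 < (N:ℝ) * G 1 - m * G (hfun ω2) := by
      have e1 := mul_pos hm0 (sub_pos.mpr hGy)
      have e2 := mul_nonneg (sub_nonneg.mpr hmN) hG1pos.le
      rw [mul_sub] at e1
      rw [sub_mul] at e2
      linarith
    have hB12 : (N:ℝ) * G 1 - m * G (hfun ω1) < (N:ℝ) * G 1 - m * G (hfun ω2) := by
      have := mul_lt_mul_of_pos_left hGlt2 hm0
      linarith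
    have hP1 : 0 < C * ω1 ^ q := mul_pos hC0 (Real.rpow_pos_of_pos hω10 _)
    have hP12 : C * ω1 ^ q ≤ C * ω2 ^ q :=
      mul_le_mul_of_nonneg_left (Real.rpow_le_rpow hω10.le h12.le hq0) hC0.le
    simp only [hmass2]
    exact lt_of_lt_of_le (mul_lt_mul_of_pos_left hB12 hP1)
      (mul_le_mul_of_nonneg_right hP12 hB2pos.le)
  have hSMmass : StrictMonoOn (massState μ α N j) (Set.Ioi ωc) := by
    intro a ha b hb hab
    rw [hmass a ha, hmass b hb]
    exact hSM ha hb hab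
  -- the limit value at the left endpoint
  set L : ℝ := C * ωc ^ q * (2 * (j:ℝ) * G 1) with hL
  have hsqc : Real.sqrt ωc = |α| / m := by
    rw [hωcdef, show α ^ 2 / m ^ 2 = (|α| / m) ^ 2 by rw [div_pow, sq_abs]]
    exact Real.sqrt_sq (by positivity)
  have hfc1 : hfun ωc = 1 := by
    simp only [hhfun, hsqc]
    field_simp
  have hlim : Filter.Tendsto mass2 (nhdsWithin ωc (Set.Ioi ωc)) (nhds L) := by
    have hpre : Filter.Tendsto (fun ω : ℝ => C * ω ^ q) (nhdsWithin ωc (Set.Ioi ωc))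
        (nhds (C * ωc ^ q)) :=
      ((continuousAt_const.mul (Real.continuousAt_rpow_const ωc q
        (Or.inl hωc.ne'))).tendsto).mono_left nhdsWithin_le_nhds
    have hfuntendsto : Filter.Tendsto hfun (nhdsWithin ωc (Set.Ioi ωc))
        (nhdsWithin 1 (Set.Icc 0 1)) := by
      rw [tendsto_nhdsWithin_iff]
      constructor
      · have hc : ContinuousAt hfun ωc := by
          rw [hhfun]
          apply ContinuousAt.div continuousAt_const
          · exact continuousAt_const.mul Real.continuous_sqrt.continuousAt
          · rw [hsqc]
            have : m * (|α| / m) = |α| := by field_simp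
            rw [this]
            exact hα0.ne'
        have := hc.tendsto.mono_left (nhdsWithin_le_nhds (s := Set.Ioi ωc))
        rwa [hfc1] at this
      · exact eventually_nhdsWithin_of_forall fun ω hω =>
          ⟨(hprop ω hω).2.1.le, (hprop ω hω).2.2.le⟩
    have hGcont : ContinuousWithinAt G (Set.Icc 0 1) 1 := by
      have h01 : IntervalIntegrable g volume 0 1 := hgI 0 1 le_rfl (by norm_num) (by norm_num) le_rfl
      have hcont := intervalIntegral.continuousOn_primitive_interval' h01
        (Set.left_mem_uIcc (a := (0:ℝ)) (b := 1))
      rw [Set.uIcc_of_le (by norm_num : (0:ℝ) ≤ 1)] at hcont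
      rw [hG]
      exact hcont.continuousWithinAt (by norm_num [Set.mem_Icc])
    have hGH : Filter.Tendsto (fun ω => G (hfun ω)) (nhdsWithin ωc (Set.Ioi ωc)) (nhds (G 1)) :=
      hGcont.tendsto.comp hfuntendsto
    have hbr : Filter.Tendsto (fun ω => (N:ℝ) * G 1 - m * G (hfun ω))
        (nhdsWithin ωc (Set.Ioi ωc)) (nhds ((N:ℝ) * G 1 - m * G 1)) :=
      tendsto_const_nhds.sub (tendsto_const_nhds.mul hGH)
    have hmul := hpre.mul hbr
    have : C * ωc ^ q * ((N:ℝ) * G 1 - m * G 1) = L := by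
      rw [hL, hm]; ring
    rw [this] at hmul
    rw [hmass2]
    exact hmul
  -- the infimum
  have himg : (massState μ α N j '' Set.Ioi ωc).Nonempty :=
    ⟨massState μ α N j (ωc + 1), ⟨ωc + 1, by simp, rfl⟩⟩
  have hglb : IsGLB (massState μ α N j '' Set.Ioi ωc) L := by
    constructor
    · rintro x ⟨ω, hω, rfl⟩
      rw [hmass ω hω]
      apply le_of_tendsto hlim
      filter_upwards [Ioo_mem_nhdsGT_of_mem ⟨le_refl ωc, hω⟩] with ω' hω'
      exact (hSM (Set.mem_Ioi.mpr hω'.1) hω hω'.2).le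
    · intro c hc
      apply ge_of_tendsto hlim
      filter_upwards [self_mem_nhdsWithin] with ω' hω'
      rw [← hmass ω' hω']
      exact hc ⟨ω', hω', rfl⟩
  have hsInf : sInf (massState μ α N j '' Set.Ioi ωc) = L := hglb.csInf_eq himg
  refine ⟨hSMmass, fun hj0 => ?_, fun hj1 => ⟨?_, ?_⟩⟩
  · rw [hsInf, hL, hj0]
    norm_num
  · have hint : intervalIntegral g 0 1 volume = G 1 := by rw [hG]
    rw [hsInf, hint]
  · rw [hsInf, hL]
    have hj1' : (1:ℝ) ≤ (j:ℝ) := by exact_mod_cast hj1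
    have : (0:ℝ) < 2 * (j:ℝ) * G 1 := by nlinarith
    exact mul_pos (mul_pos hC0 (Real.rpow_pos_of_pos hωc _)) this
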